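/- Let (X,Y) be a jointly Gaussian random vector in H₁ × H₂ with means m_X, m_Y, covariances C_X, C_Y, and cross-covariance C_{YX}, where C_X is injective. Then im(C_{YX}) ⊆ im(C_X^{1/2}), and the operator T = C_X^{-1/2} C_{YX} : H₁ → H₂ is Hilbert–Schmidt. -/
import Mathlib


open ContinuousLinearMap
open scoped RealInnerProductSpace

/-- For a jointly Gaussian vector `(X,Y)` in `H₁ × H₂` with injective covariance `C_X`,
trace-class covariance `C_Y` and cross-covariance `C_{YX} : H₂ → H₁` (satisfying the
Cauchy–Schwarz inequality `⟨C_{YX} k, h⟩² ≤ ⟨C_Y k, k⟩ ⟨C_X h, h⟩`), one has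
`im(C_{YX}) ⊆ im(C_X^{1/2})` and the operator `T = C_X^{-1/2} C_{YX}` is Hilbert–Schmidt. -/
theorem cross_covariance_range_and_hilbertSchmidt
    {H₁ H₂ : Type*} [NormedAddCommGroup H₁] [InnerProductSpace ℝ H₁] [CompleteSpace H₁]
    [NormedAddCommGroup H₂] [InnerProductSpace ℝ H₂] [CompleteSpace H₂]
    (CX CXhalf : H₁ →L[ℝ] H₁) (CY : H₂ →L[ℝ] H₂) (CYX : H₂ →L[ℝ] H₁)
    (hCX_sa : IsSelfAdjoint CX) (hCXhalf_sa : IsSelfAdjoint CXhalf)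
    (hCXhalf_sq : CXhalf.comp CXhalf = CX)
    (hCX_inj : Function.Injective CX)
    (hCY_sa : IsSelfAdjoint CY) (hCY_pos : ∀ k : H₂, 0 ≤ ⟪CY k, k⟫)
    (hCY_trace : ∀ bY : HilbertBasis ℕ ℝ H₂, Summable fun n => ⟪CY (bY n), bY n⟫)
    (hCS : ∀ (k : H₂) (h : H₁), ⟪CYX k, h⟫ ^ 2 ≤ ⟪CY k, k⟫ * ⟪CX h, h⟫) :
    Set.range CYX ⊆ Set.range CXhalf ∧
      ∃ T : H₂ →L[ℝ] H₁, CXhalf.comp T = CYX ∧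
        ∀ bY : HilbertBasis ℕ ℝ H₂, Summable fun n => ‖T (bY n)‖ ^ 2 := by
  -- symmetry of CXhalf
  have hsym : ∀ x y : H₁, ⟪CXhalf x, y⟫ = ⟪x, CXhalf y⟫ := by
    intro x y
    nth_rewrite 1 [← hCXhalf_sa.adjoint_eq]
    exact adjoint_inner_left _ _ _
  have hCXsq : ∀ x : H₁, CX x = CXhalf (CXhalf x) := by
    intro x; rw [← hCXhalf_sq]; rfl
  -- CXhalf is injective
  have hhalf_inj : Function.Injective (CXhalf : H₁ →ₗ[ℝ] H₁) := by
    intro x y hxy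
    apply hCX_inj
    simp only [hCXsq]
    exact congrArg _ hxy
  -- ⟪CX h, h⟫ = ‖CXhalf h‖ ^ 2
  have hCXnorm : ∀ h : H₁, ⟪CX h, h⟫ = ‖CXhalf h‖ ^ 2 := by
    intro h
    rw [hCXsq, hsym, real_inner_self_eq_norm_sq]
  -- key existence
  have key : ∀ k : H₂, ∃ w : H₁, CXhalf w = CYX k ∧ ‖w‖ ≤ Real.sqrt ⟪CY k, k⟫ := by
    intro k
    set c := Real.sqrt ⟪CY k, k⟫ with hc
    have hc0 : 0 ≤ c := Real.sqrt_nonneg _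
    set p : Submodule ℝ H₁ := LinearMap.range (CXhalf : H₁ →ₗ[ℝ] H₁) with hp
    let e : H₁ ≃ₗ[ℝ] p := LinearEquiv.ofInjective _ hhalf_inj
    have he : ∀ x : p, CXhalf (e.symm x) = (x : H₁) := by
      intro x
      conv_rhs => rw [← e.apply_symm_apply x]
      exact (LinearEquiv.ofInjective_apply (h := hhalf_inj) (CXhalf : H₁ →ₗ[ℝ] H₁) (e.symm x)).symm
    let f₀ : p →ₗ[ℝ] ℝ := ((innerSL ℝ (CYX k)).toLinearMap).comp e.symm.toLinearMap
    have hf₀ : ∀ x : p, f₀ x = ⟪CYX k, e.symm x⟫ := fun x => rfl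
    have hbound : ∀ x : p, ‖f₀ x‖ ≤ c * ‖x‖ := by
      intro x
      have h1 : ⟪CYX k, e.symm x⟫ ^ 2 ≤ ⟪CY k, k⟫ * ⟪CX (e.symm x), e.symm x⟫ := hCS k _
      have h2 : ⟪CX (e.symm x), e.symm x⟫ = ‖(x : H₁)‖ ^ 2 := by
        rw [hCXnorm, he]
      rw [hf₀, Real.norm_eq_abs, ← Real.sqrt_sq_eq_abs]
      calc Real.sqrt (⟪CYX k, e.symm x⟫ ^ 2)
          ≤ Real.sqrt (⟪CY k, k⟫ * ‖(x : H₁)‖ ^ 2) := by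
            apply Real.sqrt_le_sqrt; rw [← h2]; exact h1
        _ = c * ‖(x : H₁)‖ := by
            rw [Real.sqrt_mul (hCY_pos k), Real.sqrt_sq (norm_nonneg _)]
        _ = c * ‖x‖ := rfl
    let f : p →L[ℝ] ℝ := f₀.mkContinuous c hbound
    obtain ⟨g, hg, hgnorm⟩ := exists_extension_norm_eq p f
    set w := (InnerProductSpace.toDual ℝ H₁).symm g with hw
    have hwapp : ∀ y : H₁, ⟪w, y⟫ = g y := fun y => InnerProductSpace.toDual_symm_apply
    refine ⟨w, ?_, ?_⟩
    · apply ext_inner_right ℝ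
      intro h
      have hm : CXhalf h ∈ p := LinearMap.mem_range_self _ h
      have hesymm : e.symm ⟨CXhalf h, hm⟩ = h := by
        apply hhalf_inj
        exact he ⟨CXhalf h, hm⟩
      calc ⟪CXhalf w, h⟫ = ⟪w, CXhalf h⟫ := hsym w h
        _ = g (CXhalf h) := hwapp _
        _ = f ⟨CXhalf h, hm⟩ := hg ⟨CXhalf h, hm⟩
        _ = ⟪CYX k, e.symm ⟨CXhalf h, hm⟩⟫ := rfl
        _ = ⟪CYX k, h⟫ := by rw [hesymm]
    · have : ‖w‖ = ‖g‖ := LinearIsometryEquiv.norm_map _ g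
      rw [this, hgnorm]
      exact f₀.mkContinuous_norm_le hc0 hbound
  -- define T
  choose Tfun hT1 hT2 using key
  have hadd : ∀ k₁ k₂ : H₂, Tfun (k₁ + k₂) = Tfun k₁ + Tfun k₂ := by
    intro k₁ k₂
    apply hhalf_inj
    show CXhalf (Tfun (k₁ + k₂)) = CXhalf (Tfun k₁ + Tfun k₂)
    rw [map_add, hT1, hT1, hT1, map_add]
  have hsmul : ∀ (c : ℝ) (k : H₂), Tfun (c • k) = c • Tfun k := by
    intro c k
    apply hhalf_inj
    show CXhalf (Tfun (c • k)) = CXhalf (c • Tfun k)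
    rw [map_smul, hT1, hT1, map_smul]
  let Tlin : H₂ →ₗ[ℝ] H₁ :=
    { toFun := Tfun, map_add' := hadd, map_smul' := hsmul }
  have hTbound : ∀ k : H₂, ‖Tlin k‖ ≤ Real.sqrt ‖CY‖ * ‖k‖ := by
    intro k
    refine (hT2 k).trans ?_
    have h1 : ⟪CY k, k⟫ ≤ ‖CY‖ * ‖k‖ ^ 2 := by
      calc ⟪CY k, k⟫ ≤ ‖CY k‖ * ‖k‖ := real_inner_le_norm _ _
        _ ≤ (‖CY‖ * ‖k‖) * ‖k‖ := by
            apply mul_le_mul_of_nonneg_right (CY.le_opNorm k) (norm_nonneg _)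
        _ = ‖CY‖ * ‖k‖ ^ 2 := by ring
    calc Real.sqrt ⟪CY k, k⟫ ≤ Real.sqrt (‖CY‖ * ‖k‖ ^ 2) := Real.sqrt_le_sqrt h1
      _ = Real.sqrt ‖CY‖ * ‖k‖ := by
          rw [Real.sqrt_mul (norm_nonneg _), Real.sqrt_sq (norm_nonneg _)]
  let T : H₂ →L[ℝ] H₁ := Tlin.mkContinuous (Real.sqrt ‖CY‖) hTbound
  have hTapp : ∀ k : H₂, T k = Tfun k := fun k => rfl
  have hTsq : ∀ k : H₂, ‖T k‖ ^ 2 ≤ ⟪CY k, k⟫ := by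
    intro k
    have := hT2 k
    calc ‖T k‖ ^ 2 ≤ Real.sqrt ⟪CY k, k⟫ ^ 2 := by
          apply pow_le_pow_left₀ (norm_nonneg _) _ 2
          rw [hTapp]; exact this
      _ = ⟪CY k, k⟫ := Real.sq_sqrt (hCY_pos k)
  refine ⟨?_, T, ?_, ?_⟩
  · rintro _ ⟨k, rfl⟩
    exact ⟨Tfun k, hT1 k⟩
  · ext k
    simp only [comp_apply, hTapp, hT1]
  · intro bY
    exact Summable.of_nonneg_of_le (fun n => sq_nonneg _) (fun n => hTsq (bY n)) (hCY_trace bY)
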